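/- Let A be a finite nonempty type, r : A → ℝ a binary reward taking values in {0,1}, π_ref a probability mass function on A with full support, and β > 0. Write p(π) = ∑_a π(a) r(a) for the success probability of a probability mass function π on A, and KL(π‖π_ref) = ∑_a π(a) log(π(a)/π_ref(a)). Assume p_ref := p(π_ref) ∈ (0,1). Suppose π* is a probability mass function on A with p* := p(π*) ∈ (0,1) that is a fixed point of the GRPO iteration, i.e., π* maximizes over all probability mass functions π on A (with support contained in the support of π_ref) the objective G(π) = ∑_a π(a) · (r(a) − p*)/√(p*(1 − p*)) − β · KL(π‖π_ref), where the advantage normalization uses π* itself. Then the success probability is strictly amplified: p* > p_ref. -/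

import Mathlib

open scoped BigOperators

/-- A probability mass function on a finite type, as a real-valued function
which is nonnegative and sums to one. -/
def IsPMF {A : Type*} [Fintype A] (π : A → ℝ) : Prop :=
  (∀ a, 0 ≤ π a) ∧ ∑ a, π a = 1

/-- The Kullback–Leibler divergence `KL(π‖π_ref) = ∑_a π(a) log(π(a)/π_ref(a))`
(with the convention `0 · log 0 = 0`, which holds automatically here). -/
noncomputable def klDivFin {A : Type*} [Fintype A] (π πref : A → ℝ) : ℝ :=
  ∑ a, π a * Real.log (π a / πref a)

lemma term_ge {π ρ : ℝ} (hπ : 0 ≤ π) (hρ : 0 ≤ ρ) (hsupp : ρ = 0 → π = 0) :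
    π - ρ ≤ π * Real.log (π / ρ) := by
  rcases eq_or_lt_of_le hπ with h0 | hπpos
  · simp [← h0]; linarith
  · have hρpos : 0 < ρ := by
      rcases eq_or_lt_of_le hρ with h | h
      · exact absurd (hsupp h.symm) (ne_of_gt hπpos)
      · exact h
    have h1 : Real.log (ρ / π) ≤ ρ / π - 1 :=
      Real.log_le_sub_one_of_pos (div_pos hρpos hπpos)
    have h2 : Real.log (π / ρ) = -Real.log (ρ / π) := by
      rw [← Real.log_inv]; congr 1; field_simp
    rw [h2]
    have := mul_le_mul_of_nonneg_left h1 hπ  -- π * log(ρ/π) ≤ π*(ρ/π - 1) = ρ - π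
    have h3 : π * (ρ / π - 1) = ρ - π := by field_simp
    nlinarith

lemma term_gt {π ρ : ℝ} (hπ : 0 < π) (hρ : 0 < ρ) (hne : π ≠ ρ) :
    π - ρ < π * Real.log (π / ρ) := by
  have h1 : Real.log (ρ / π) < ρ / π - 1 := by
    apply Real.log_lt_sub_one_of_pos (div_pos hρ hπ)
    intro h
    exact hne (by field_simp at h; linarith)
  have h2 : Real.log (π / ρ) = -Real.log (ρ / π) := by
    rw [← Real.log_inv]; congr 1; field_simp
  rw [h2]
  have := mul_lt_mul_of_pos_left h1 hπ
  have h3 : π * (ρ / π - 1) = ρ - π := by field_simp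
  nlinarith

lemma gibbs_nonneg {A : Type*} [Fintype A] {π ρ : A → ℝ}
    (hπ : IsPMF π) (hρ : IsPMF ρ) (hsupp : ∀ a, ρ a = 0 → π a = 0) :
    0 ≤ klDivFin π ρ := by
  have h : ∑ a, (π a - ρ a) ≤ klDivFin π ρ := by
    apply Finset.sum_le_sum
    intro a _
    exact term_ge (hπ.1 a) (hρ.1 a) (hsupp a)
  rw [Finset.sum_sub_distrib, hπ.2, hρ.2] at h
  linarith

lemma gibbs_pos {A : Type*} [Fintype A] {π ρ : A → ℝ}
    (hπ : IsPMF π) (hρ : IsPMF ρ) (hπfull : ∀ a, 0 < π a) (hρfull : ∀ a, 0 < ρ a)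
    {c : A} (hne : π c ≠ ρ c) :
    0 < klDivFin π ρ := by
  have h : ∑ a, (π a - ρ a) < klDivFin π ρ := by
    apply Finset.sum_lt_sum
    · intro a _
      exact term_ge (hπ.1 a) (hρ.1 a) (fun h => absurd h (ne_of_gt (hρfull a)))
    · exact ⟨c, Finset.mem_univ c, term_gt (hπfull c) (hρfull c) hne⟩
  rw [Finset.sum_sub_distrib, hπ.2, hρ.2] at h
  linarith

/-- GRPO success amplification: if `π*` (with success probability
`p* ∈ (0,1)`) maximizes the KL-regularized group-relative-advantage objective
`G(π) = ∑_a π(a)·(r(a) − p*)/√(p*(1−p*)) − β·KL(π‖π_ref)` over all pmfs `π`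
with support contained in the support of the full-support reference pmf
`π_ref`, where `r` is a binary reward and `p_ref ∈ (0,1)`, then the success
probability is strictly amplified: `p* > p_ref`. -/
theorem grpo_success_amplification {A : Type*} [Fintype A] [Nonempty A]
    (r : A → ℝ) (hr : ∀ a, r a = 0 ∨ r a = 1)
    (πref : A → ℝ) (href : IsPMF πref) (hfull : ∀ a, 0 < πref a)
    (β : ℝ) (hβ : 0 < β)
    (πstar : A → ℝ) (hstar : IsPMF πstar)
    (pref pstar : ℝ)
    (hpref : pref = ∑ a, πref a * r a)
    (hpstar : pstar = ∑ a, πstar a * r a)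
    (hpref01 : 0 < pref ∧ pref < 1)
    (hpstar01 : 0 < pstar ∧ pstar < 1)
    (hfix : ∀ π : A → ℝ, IsPMF π → (∀ a, πref a = 0 → π a = 0) →
      (∑ a, π a * ((r a - pstar) / Real.sqrt (pstar * (1 - pstar)))) -
          β * klDivFin π πref ≤
        (∑ a, πstar a * ((r a - pstar) / Real.sqrt (pstar * (1 - pstar)))) -
          β * klDivFin πstar πref) :
    pref < pstar := by
  obtain ⟨hpr0, hpr1⟩ := hpref01
  obtain ⟨hps0, hps1⟩ := hpstar01
  set s : ℝ := Real.sqrt (pstar * (1 - pstar)) with hs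
  have hspos : 0 < s := Real.sqrt_pos.mpr (by nlinarith)
  have hβs : 0 < β * s := mul_pos hβ hspos
  have hβsne : β * s ≠ 0 := ne_of_gt hβs
  set x : A → ℝ := fun a => (r a - pstar) / (β * s) with hx
  set Z : ℝ := ∑ a, πref a * Real.exp (x a) with hZ
  have hZpos : 0 < Z :=
    Finset.sum_pos (fun a _ => mul_pos (hfull a) (Real.exp_pos _)) Finset.univ_nonempty
  have hZne : Z ≠ 0 := ne_of_gt hZpos
  set g : A → ℝ := fun a => πref a * Real.exp (x a) / Z with hg
  have hgfull : ∀ a, 0 < g a :=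
    fun a => div_pos (mul_pos (hfull a) (Real.exp_pos _)) hZpos
  have hgsum : ∑ a, g a = 1 := by
    simp only [hg]
    rw [← Finset.sum_div, ← hZ, div_self hZne]
  have hgpmf : IsPMF g := ⟨fun a => le_of_lt (hgfull a), hgsum⟩
  -- log ratio for g
  have hlogg : ∀ a, Real.log (g a / πref a) = x a - Real.log Z := by
    intro a
    have hpa : πref a ≠ 0 := ne_of_gt (hfull a)
    have h1 : g a / πref a = Real.exp (x a) / Z := by
      simp only [hg]
      field_simp
    rw [h1, Real.log_div (Real.exp_ne_zero _) hZne, Real.log_exp]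
  -- KL(g ‖ πref)
  have hklg : klDivFin g πref = (∑ a, g a * x a) - Real.log Z := by
    unfold klDivFin
    rw [show (∑ a, g a * Real.log (g a / πref a)) = ∑ a, (g a * x a - g a * Real.log Z) by
      apply Finset.sum_congr rfl; intro a _; rw [hlogg a]; ring]
    rw [Finset.sum_sub_distrib, ← Finset.sum_mul, hgsum, one_mul]
  -- advantage equals β * x
  have hfx : ∀ a, (r a - pstar) / s = β * x a := by
    intro a
    simp only [hx]
    field_simp
  -- value of objective at g
  have hGg : (∑ a, g a * ((r a - pstar) / s)) - β * klDivFin g πref = β * Real.log Z := by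
    rw [hklg]
    rw [show (∑ a, g a * ((r a - pstar) / s)) = β * ∑ a, g a * x a by
      rw [Finset.mul_sum]; apply Finset.sum_congr rfl; intro a _; rw [hfx a]; ring]
    ring
  -- value of advantage term at πstar is 0
  have hstar0 : (∑ a, πstar a * ((r a - pstar) / s)) = 0 := by
    have he : ∀ a ∈ Finset.univ, πstar a * ((r a - pstar) / s)
        = πstar a * r a / s - pstar / s * πstar a := by
      intro a _; field_simp
    rw [Finset.sum_congr rfl he, Finset.sum_sub_distrib, ← Finset.sum_div, ← Finset.mul_sum,
      ← hpstar, hstar.2, mul_one]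
    ring
  -- KL(πstar ‖ πref) ≥ 0
  have hklstar : 0 ≤ klDivFin πstar πref :=
    gibbs_nonneg hstar href (fun a h => absurd h (ne_of_gt (hfull a)))
  -- from the fixed point: log Z ≤ 0
  have hlogZ : Real.log Z ≤ 0 := by
    have h := hfix g hgpmf (fun a h => absurd h (ne_of_gt (hfull a)))
    rw [hGg, hstar0] at h
    nlinarith
  -- r is non-constant
  have hex1 : ∃ a, r a = 1 := by
    by_contra h
    push_neg at h
    have : ∀ a, r a = 0 := fun a => (hr a).resolve_right (h a)
    rw [hpref] at hpr0
    simp [this] at hpr0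
  have hex0 : ∃ a, r a = 0 := by
    by_contra h
    push_neg at h
    have h1 : ∀ a, r a = 1 := fun a => (hr a).resolve_left (h a)
    rw [hpref] at hpr1
    simp [h1, href.2] at hpr1
  obtain ⟨a1, ha1⟩ := hex1
  obtain ⟨a0, ha0⟩ := hex0
  -- πref ≠ g somewhere
  have hne : ∃ c, πref c ≠ g c := by
    by_contra h
    push_neg at h
    have hexp : ∀ c, Real.exp (x c) = Z := by
      intro c
      have hpc : πref c ≠ 0 := ne_of_gt (hfull c)
      have h5 := h c
      simp only [hg] at h5
      field_simp at h5
      linarith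
    have hZZ := (hexp a1).trans (hexp a0).symm
    have hxeq : x a1 = x a0 := Real.exp_injective hZZ
    simp only [hx, ha1, ha0] at hxeq
    rw [div_eq_div_iff hβsne hβsne] at hxeq
    nlinarith
  obtain ⟨c, hc⟩ := hne
  -- KL(πref ‖ g) = log Z - ∑ πref x
  have hklref : klDivFin πref g = Real.log Z - ∑ a, πref a * x a := by
    unfold klDivFin
    rw [show (∑ a, πref a * Real.log (πref a / g a))
        = ∑ a, (πref a * Real.log Z - πref a * x a) by
      apply Finset.sum_congr rfl
      intro a _
      have hpa : πref a ≠ 0 := ne_of_gt (hfull a)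
      have h1 : πref a / g a = Z / Real.exp (x a) := by
        simp only [hg]
        rw [div_div_eq_mul_div, div_eq_div_iff (by positivity) (Real.exp_ne_zero _)]
        ring
      rw [h1, Real.log_div hZne (Real.exp_ne_zero _), Real.log_exp]
      ring]
    rw [Finset.sum_sub_distrib, ← Finset.sum_mul, href.2, one_mul]
  have hgibbs : 0 < klDivFin πref g := gibbs_pos href hgpmf hfull hgfull hc
  rw [hklref] at hgibbs
  -- compute ∑ πref x
  have hsum : ∑ a, πref a * x a = (pref - pstar) / (β * s) := by
    simp only [hx]
    have he : ∀ a ∈ Finset.univ, πref a * ((r a - pstar) / (β * s))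
        = πref a * r a / (β * s) - pstar / (β * s) * πref a := by
      intro a _; field_simp
    rw [Finset.sum_congr rfl he, Finset.sum_sub_distrib, ← Finset.sum_div, ← Finset.mul_sum,
      ← hpref, href.2, mul_one]
    ring
  rw [hsum] at hgibbs
  have hneg : (pref - pstar) / (β * s) < 0 := by linarith
  rcases div_neg_iff.mp hneg with ⟨_, h2⟩ | ⟨h1, _⟩
  · linarith
  · linarith
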